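/- Weak subadditivity of Rényi entropies: let d_A and d_B be positive integers and let ρ_{AB} be a positive semidefinite matrix with trace 1 indexed by the product {1,…,d_A} × {1,…,d_B}, with reduced matrix ρ_A obtained by partial trace over the second factor. Then for every real α ≥ 0 with α ≠ 1, S_R^{(α)}(ρ_{AB}) ≤ S_R^{(α)}(ρ_A) + log₂ d_B; equivalently, log₂(d_A d_B) − S_R^{(α)}(ρ_{AB}) ≥ log₂ d_A − S_R^{(α)}(ρ_A). -/

import Mathlib

open scoped Classical ComplexOrder

/-- The Rényi-α entropy of a (Hermitian) matrix `ρ` with eigenvalues `λᵢ`: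
`S_R^{(α)}(ρ) = (1/(1−α)) log₂ (Σᵢ λᵢ^α)` (junk value `0` if `ρ` is not Hermitian). -/
noncomputable def renyiEntropy {m : Type*} [Fintype m] [DecidableEq m]
    (α : ℝ) (ρ : Matrix m m ℂ) : ℝ :=
  if h : ρ.IsHermitian then
    (1 / (1 - α)) * Real.logb 2 (∑ i, h.eigenvalues i ^ α)
  else 0

/-- The partial trace over the second tensor factor. -/
noncomputable def ptraceB {dA dB : ℕ}
    (ρ : Matrix (Fin dA × Fin dB) (Fin dA × Fin dB) ℂ) : Matrix (Fin dA) (Fin dA) ℂ :=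
  Matrix.of fun i i' => ∑ j : Fin dB, ρ (i, j) (i', j)

open Matrix Kronecker in
private lemma ptraceB_isHermitian {dA dB : ℕ} {ρ : Matrix (Fin dA × Fin dB) (Fin dA × Fin dB) ℂ}
    (h : ρ.IsHermitian) : (ptraceB ρ).IsHermitian := by
  ext i i'
  simp only [conjTranspose_apply, ptraceB, of_apply, star_sum]
  exact Finset.sum_congr rfl fun j _ => h.apply _ _

private lemma sum_eigenvalues_eq_trace' {n : Type*} [Fintype n] [DecidableEq n] {A : Matrix n n ℂ}
    (hA : A.IsHermitian) : ((∑ i, hA.eigenvalues i : ℝ) : ℂ) = A.trace := by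
  conv_rhs => rw [hA.spectral_theorem]
  rw [Unitary.conjStarAlgAut_apply, Matrix.trace_mul_cycle, Matrix.mem_unitaryGroup_iff'.mp (hA.eigenvectorUnitary).2, one_mul,
    Matrix.trace_diagonal]
  push_cast
  rfl

open Matrix Kronecker in
/-- The diagonal of `ρ` expressed in the product basis built from the eigenvectors of the
reduced matrix: a doubly stochastic matrix `D` linking the eigenvalues of `ρ` to nonnegative
numbers `x p` whose partial sums are the eigenvalues of the reduced matrix. -/
private lemma exists_ds {dA dB : ℕ} (ρ : Matrix (Fin dA × Fin dB) (Fin dA × Fin dB) ℂ)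
    (hH : ρ.IsHermitian) (hA : (ptraceB ρ).IsHermitian) :
    ∃ (x : Fin dA × Fin dB → ℝ) (D : (Fin dA × Fin dB) → (Fin dA × Fin dB) → ℝ),
      (∀ p q, 0 ≤ D p q) ∧ (∀ p, ∑ q, D p q = 1) ∧ (∀ q, ∑ p, D p q = 1) ∧
      (∀ p, x p = ∑ q, D p q * hH.eigenvalues q) ∧
      (∀ j, ∑ k, x (j, k) = hA.eigenvalues j) := by
  set U : Matrix (Fin dA × Fin dB) (Fin dA × Fin dB) ℂ :=
    (hH.eigenvectorUnitary : Matrix (Fin dA × Fin dB) (Fin dA × Fin dB) ℂ) with hU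
  set V : Matrix (Fin dA) (Fin dA) ℂ :=
    (hA.eigenvectorUnitary : Matrix (Fin dA) (Fin dA) ℂ) with hV
  set W : Matrix (Fin dA × Fin dB) (Fin dA × Fin dB) ℂ := V ⊗ₖ (1 : Matrix (Fin dB) (Fin dB) ℂ)
    with hWdef
  have hUu : star U * U = 1 := Matrix.mem_unitaryGroup_iff'.mp (hH.eigenvectorUnitary).2
  have hUu' : U * star U = 1 := Matrix.mem_unitaryGroup_iff.mp (hH.eigenvectorUnitary).2
  have hVu : star V * V = 1 := Matrix.mem_unitaryGroup_iff'.mp (hA.eigenvectorUnitary).2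
  have hVu' : V * star V = 1 := Matrix.mem_unitaryGroup_iff.mp (hA.eigenvectorUnitary).2
  have hstarW : star W = (star V) ⊗ₖ (1 : Matrix (Fin dB) (Fin dB) ℂ) := by
    ext p q
    simp [hWdef, Matrix.star_apply, Matrix.one_apply, apply_ite (star : ℂ → ℂ), eq_comm]
  have hWW : star W * W = 1 := by
    rw [hstarW, hWdef, ← mul_kronecker_mul, hVu, one_mul, one_kronecker_one]
  have hWW' : W * star W = 1 := by
    rw [hstarW, hWdef, ← mul_kronecker_mul, hVu', one_mul, one_kronecker_one]
  set M : Matrix (Fin dA × Fin dB) (Fin dA × Fin dB) ℂ := star W * U with hM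
  have hMM' : M * star M = 1 := by
    rw [hM, Matrix.star_mul, star_star, mul_assoc, ← mul_assoc U, hUu', one_mul, hWW]
  have hM'M : star M * M = 1 := by
    rw [hM, Matrix.star_mul, star_star, mul_assoc, ← mul_assoc W, hWW', one_mul, hUu]
  set D : (Fin dA × Fin dB) → (Fin dA × Fin dB) → ℝ := fun p q => Complex.normSq (M p q)
    with hD
  set x : (Fin dA × Fin dB) → ℝ := fun p => ∑ q, D p q * hH.eigenvalues q with hx
  have hD0 : ∀ p q, 0 ≤ D p q := fun p q => Complex.normSq_nonneg _
  have hrow : ∀ p, ∑ q, D p q = 1 := by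
    intro p
    have h1 : ((∑ q, D p q : ℝ) : ℂ) = 1 := by
      push_cast
      calc ∑ q, (Complex.normSq (M p q) : ℂ)
          = ∑ q, M p q * star (M p q) := by
            refine Finset.sum_congr rfl fun q _ => ?_
            rw [Complex.star_def, Complex.mul_conj]
        _ = (M * star M) p p := by
            rw [Matrix.mul_apply]
            exact Finset.sum_congr rfl fun q _ => by rw [Matrix.star_apply]
        _ = 1 := by rw [hMM', Matrix.one_apply_eq]
    exact_mod_cast h1
  have hcol : ∀ q, ∑ p, D p q = 1 := by
    intro q
    have h1 : ((∑ p, D p q : ℝ) : ℂ) = 1 := by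
      push_cast
      calc ∑ p, (Complex.normSq (M p q) : ℂ)
          = ∑ p, star (M p q) * M p q := by
            refine Finset.sum_congr rfl fun p _ => ?_
            rw [Complex.star_def, mul_comm, Complex.mul_conj]
        _ = (star M * M) q q := by
            rw [Matrix.mul_apply]
            exact Finset.sum_congr rfl fun p _ => by rw [Matrix.star_apply]
        _ = 1 := by rw [hM'M, Matrix.one_apply_eq]
    exact_mod_cast h1
  have hdiag : star W * ρ * W = M * diagonal (RCLike.ofReal ∘ hH.eigenvalues) * star M := by
    rw [hM, Matrix.star_mul, star_star]
    nth_rewrite 1 [hH.spectral_theorem]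
    rw [Unitary.conjStarAlgAut_apply, ← hU]
    simp only [Matrix.mul_assoc]
  have hxdiag : ∀ p, (star W * ρ * W) p p = ((x p : ℝ) : ℂ) := by
    intro p
    rw [hdiag, Matrix.mul_apply, hx]
    push_cast
    refine Finset.sum_congr rfl fun q _ => ?_
    rw [Matrix.mul_diagonal, Matrix.star_apply, Complex.star_def, mul_right_comm,
      Complex.mul_conj]
    simp [hD, mul_comm]
  have hVdiag : star V * (ptraceB ρ) * V = diagonal (RCLike.ofReal ∘ hA.eigenvalues) := by
    rw [hV]
    exact by have := hA.conjStarAlgAut_star_eigenvectorUnitary; rwa [Unitary.conjStarAlgAut_star_apply] at this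
  have hsum : ∀ j : Fin dA, ∑ k, x (j, k) = hA.eigenvalues j := by
    intro j
    have key : ∑ k, (star W * ρ * W) (j, k) (j, k) = (star V * ptraceB ρ * V) j j := by
      simp only [Matrix.mul_apply, hstarW, hWdef, Matrix.kroneckerMap_apply, Matrix.one_apply,
        Fintype.sum_prod_type, Matrix.star_apply, ptraceB, Matrix.of_apply, mul_ite, ite_mul,
        mul_zero, zero_mul, mul_one, one_mul, Finset.sum_ite_eq, Finset.sum_ite_eq',
        Finset.mem_univ, if_true, Finset.mul_sum, Finset.sum_mul, apply_ite (star : ℂ → ℂ), star_zero]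
      rw [Finset.sum_comm]
      exact Finset.sum_congr rfl fun y _ => Finset.sum_comm
    have h2 : ((∑ k, x (j, k) : ℝ) : ℂ) = ((hA.eigenvalues j : ℝ) : ℂ) := by
      push_cast
      calc ∑ k, ((x (j, k) : ℝ) : ℂ)
          = ∑ k, (star W * ρ * W) (j, k) (j, k) :=
            Finset.sum_congr rfl fun k _ => (hxdiag (j, k)).symm
        _ = (star V * ptraceB ρ * V) j j := key
        _ = ((hA.eigenvalues j : ℝ) : ℂ) := by rw [hVdiag]; simp
    exact_mod_cast h2
  exact ⟨x, D, hD0, hrow, hcol, fun p => rfl, hsum⟩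

/-- **Weak subadditivity of Rényi entropies.**  For a bipartite state `ρ_AB` (positive
semidefinite, trace one) with reduced state `ρ_A`, every real order `α ≥ 0`, `α ≠ 1`,
satisfies `S_R^{(α)}(ρ_AB) ≤ S_R^{(α)}(ρ_A) + log₂ d_B`; equivalently,
`log₂(d_A d_B) − S_R^{(α)}(ρ_AB) ≥ log₂ d_A − S_R^{(α)}(ρ_A)`. -/
theorem renyi_weak_subadditivity (dA dB : ℕ) (hdA : 0 < dA) (hdB : 0 < dB)
    (α : ℝ) (hα0 : 0 ≤ α) (hα1 : α ≠ 1)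
    (ρAB : Matrix (Fin dA × Fin dB) (Fin dA × Fin dB) ℂ)
    (hρ : ρAB.PosSemidef) (htr : ρAB.trace = 1) :
    renyiEntropy α ρAB ≤ renyiEntropy α (ptraceB ρAB) + Real.logb 2 dB
    ∧ Real.logb 2 ((dA : ℝ) * dB) - renyiEntropy α ρAB
        ≥ Real.logb 2 dA - renyiEntropy α (ptraceB ρAB) := by
  classical
  have hH : ρAB.IsHermitian := hρ.1
  have hA : (ptraceB ρAB).IsHermitian := ptraceB_isHermitian hH
  obtain ⟨x, D, hD0, hrow, hcol, hxdef, hxmu⟩ := exists_ds ρAB hH hA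
  set lam : Fin dA × Fin dB → ℝ := hH.eigenvalues with hlam
  set mu : Fin dA → ℝ := hA.eigenvalues with hmu
  have hdB' : (0:ℝ) < dB := by exact_mod_cast hdB
  have hdA' : (0:ℝ) < dA := by exact_mod_cast hdA
  have hlam0 : ∀ q, 0 ≤ lam q := fun q => hρ.eigenvalues_nonneg q
  have hx0 : ∀ p, 0 ≤ x p := fun p => by
    rw [hxdef]
    exact Finset.sum_nonneg fun q _ => mul_nonneg (hD0 p q) (hlam0 q)
  have hmu0 : ∀ j, 0 ≤ mu j := fun j => by
    rw [← hxmu j]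
    exact Finset.sum_nonneg fun k _ => hx0 _
  have hlamsum : ∑ q, lam q = 1 := by
    have h := sum_eigenvalues_eq_trace' hH
    rw [htr] at h
    exact_mod_cast h
  have htrA : (ptraceB ρAB).trace = 1 := by
    rw [← htr]
    simp [ptraceB, Matrix.trace, Matrix.diag, Fintype.sum_prod_type]
  have hmusum : ∑ j, mu j = 1 := by
    have h := sum_eigenvalues_eq_trace' hA
    rw [htrA] at h
    exact_mod_cast h
  set T : ℝ := ∑ q, lam q ^ α with hT
  set Mm : ℝ := ∑ j, mu j ^ α with hMm
  have hT0 : 0 < T := by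
    obtain ⟨q0, hq0⟩ : ∃ q, 0 < lam q := by
      by_contra h
      push_neg at h
      have h0 : ∑ q, lam q = 0 :=
        Finset.sum_eq_zero fun q _ => le_antisymm (h q) (hlam0 q)
      rw [hlamsum] at h0
      norm_num at h0
    calc (0:ℝ) < lam q0 ^ α := Real.rpow_pos_of_pos hq0 α
      _ ≤ T := Finset.single_le_sum (fun q _ => Real.rpow_nonneg (hlam0 q) α)
          (Finset.mem_univ q0)
  have hM0 : 0 < Mm := by
    obtain ⟨j0, hj0⟩ : ∃ j, 0 < mu j := by
      by_contra h
      push_neg at h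
      have h0 : ∑ j, mu j = 0 :=
        Finset.sum_eq_zero fun j _ => le_antisymm (h j) (hmu0 j)
      rw [hmusum] at h0
      norm_num at h0
    calc (0:ℝ) < mu j0 ^ α := Real.rpow_pos_of_pos hj0 α
      _ ≤ Mm := Finset.single_le_sum (fun j _ => Real.rpow_nonneg (hmu0 j) α)
          (Finset.mem_univ j0)
  set c : ℝ := (dB : ℝ) ^ ((1:ℝ) - α) with hc
  have hc0 : 0 < c := Real.rpow_pos_of_pos hdB' _
  -- the middle quantity
  have hmid : ∑ j, (dB:ℝ) * (mu j / dB) ^ α = c * Mm := by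
    rw [hMm, Finset.mul_sum]
    refine Finset.sum_congr rfl fun j _ => ?_
    rw [Real.div_rpow (hmu0 j) hdB'.le, hc, Real.rpow_sub hdB', Real.rpow_one]
    have hbne : ((dB:ℝ)) ^ α ≠ 0 := ne_of_gt (Real.rpow_pos_of_pos hdB' _)
    field_simp
  have hBsum : ∑ _k : Fin dB, (1:ℝ)/dB = 1 := by
    rw [Finset.sum_const, Finset.card_univ, Fintype.card_fin, nsmul_eq_mul]
    field_simp
  have hxsum : ∀ j, ∑ k, ((1:ℝ)/dB) * x (j, k) = mu j / dB := by
    intro j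
    have h1 : ∀ k : Fin dB, ((1:ℝ)/dB) * x (j, k) = x (j, k) / dB := fun k => by ring
    rw [Finset.sum_congr rfl fun k _ => h1 k, ← Finset.sum_div, hxmu j]
  -- main inequality on power sums
  have eAB : renyiEntropy α ρAB = (1 / (1 - α)) * Real.logb 2 T := by
    simp only [renyiEntropy, dif_pos hH]
    rfl
  have eA : renyiEntropy α (ptraceB ρAB) = (1 / (1 - α)) * Real.logb 2 Mm := by
    simp only [renyiEntropy, dif_pos hA]
    rfl
  have hlogc : Real.logb 2 c = (1 - α) * Real.logb 2 dB := by
    rw [hc, Real.logb, Real.logb, Real.log_rpow hdB']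
    ring
  have main : renyiEntropy α ρAB ≤ renyiEntropy α (ptraceB ρAB) + Real.logb 2 dB := by
    rcases lt_or_gt_of_ne hα1 with hlt | hgt
    · -- concave case : α < 1
      have hconc : ConcaveOn ℝ (Set.Ici 0) (fun t : ℝ => t ^ α) :=
        Real.concaveOn_rpow hα0 hlt.le
      have ineq1 : T ≤ ∑ p, x p ^ α := by
        calc T = ∑ q, ∑ p, D p q * lam q ^ α := by
              refine Finset.sum_congr rfl fun q _ => ?_
              rw [← Finset.sum_mul, hcol q, one_mul]
          _ = ∑ p, ∑ q, D p q * lam q ^ α := Finset.sum_comm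
          _ ≤ ∑ p, x p ^ α := by
              refine Finset.sum_le_sum fun p _ => ?_
              have hj := hconc.le_map_sum (fun q _ => hD0 p q) (hrow p)
                (fun q _ => Set.mem_Ici.mpr (hlam0 q)) (p := lam)
              simpa [smul_eq_mul, ← hxdef p] using hj
      have ineq2 : ∑ p, x p ^ α ≤ c * Mm := by
        rw [← hmid, Fintype.sum_prod_type]
        refine Finset.sum_le_sum fun j _ => ?_
        have hj := hconc.le_map_sum (w := fun _ : Fin dB => (1:ℝ)/dB)
          (fun k _ => by positivity) hBsum
          (fun k _ => Set.mem_Ici.mpr (hx0 (j, _))) (p := fun k => x (j, k))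
        simp only [smul_eq_mul] at hj
        rw [hxsum j] at hj
        calc ∑ k, x (j, k) ^ α
            = (dB:ℝ) * ∑ k, ((1:ℝ)/dB) * x (j, k) ^ α := by
              rw [Finset.mul_sum]
              refine Finset.sum_congr rfl fun k _ => ?_
              field_simp
          _ ≤ (dB:ℝ) * (mu j / dB) ^ α := mul_le_mul_of_nonneg_left hj hdB'.le
      have hTle : T ≤ c * Mm := ineq1.trans ineq2
      have hlog : Real.logb 2 T ≤ (1 - α) * Real.logb 2 dB + Real.logb 2 Mm := by
        have h1 := Real.logb_le_logb_of_le (by norm_num : (1:ℝ) < 2) hT0 hTle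
        rwa [Real.logb_mul (ne_of_gt hc0) (ne_of_gt hM0), hlogc] at h1
      rw [eAB, eA]
      have ha : 0 < 1 - α := by linarith
      have h2 := mul_le_mul_of_nonneg_left hlog (le_of_lt (one_div_pos.mpr ha))
      have h3 : (1/(1-α)) * ((1 - α) * Real.logb 2 dB + Real.logb 2 Mm)
          = Real.logb 2 dB + (1/(1-α)) * Real.logb 2 Mm := by
        have hne : (1:ℝ) - α ≠ 0 := by intro h; apply hα1; linarith
        field_simp
      rw [h3] at h2
      linarith
    · -- convex case : 1 < α
      have hconv : ConvexOn ℝ (Set.Ici 0) (fun t : ℝ => t ^ α) :=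
        convexOn_rpow hgt.le
      have ineq1 : ∑ p, x p ^ α ≤ T := by
        calc ∑ p, x p ^ α ≤ ∑ p, ∑ q, D p q * lam q ^ α := by
              refine Finset.sum_le_sum fun p _ => ?_
              have hj := hconv.map_sum_le (fun q _ => hD0 p q) (hrow p)
                (fun q _ => Set.mem_Ici.mpr (hlam0 q)) (p := lam)
              simpa [smul_eq_mul, ← hxdef p] using hj
          _ = ∑ q, ∑ p, D p q * lam q ^ α := Finset.sum_comm
          _ = T := by
              refine Finset.sum_congr rfl fun q _ => ?_
              rw [← Finset.sum_mul, hcol q, one_mul]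
      have ineq2 : c * Mm ≤ ∑ p, x p ^ α := by
        rw [← hmid, Fintype.sum_prod_type]
        refine Finset.sum_le_sum fun j _ => ?_
        have hj := hconv.map_sum_le (w := fun _ : Fin dB => (1:ℝ)/dB)
          (fun k _ => by positivity) hBsum
          (fun k _ => Set.mem_Ici.mpr (hx0 (j, _))) (p := fun k => x (j, k))
        simp only [smul_eq_mul] at hj
        rw [hxsum j] at hj
        calc (dB:ℝ) * (mu j / dB) ^ α
            ≤ (dB:ℝ) * ∑ k, ((1:ℝ)/dB) * x (j, k) ^ α := mul_le_mul_of_nonneg_left hj hdB'.le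
          _ = ∑ k, x (j, k) ^ α := by
              rw [Finset.mul_sum]
              refine Finset.sum_congr rfl fun k _ => ?_
              field_simp
      have hTge : c * Mm ≤ T := ineq2.trans ineq1
      have hlog : (1 - α) * Real.logb 2 dB + Real.logb 2 Mm ≤ Real.logb 2 T := by
        have h1 := Real.logb_le_logb_of_le (by norm_num : (1:ℝ) < 2)
          (mul_pos hc0 hM0) hTge
        rwa [Real.logb_mul (ne_of_gt hc0) (ne_of_gt hM0), hlogc] at h1
      rw [eAB, eA]
      have ha : 1 - α < 0 := by linarith
      have h2 := mul_le_mul_of_nonpos_left hlog (le_of_lt (one_div_neg.mpr ha))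
      have h3 : (1/(1-α)) * ((1 - α) * Real.logb 2 dB + Real.logb 2 Mm)
          = Real.logb 2 dB + (1/(1-α)) * Real.logb 2 Mm := by
        have hne : (1:ℝ) - α ≠ 0 := by intro h; apply hα1; linarith
        field_simp
      rw [h3] at h2
      linarith
  refine ⟨main, ?_⟩
  have hsplit : Real.logb 2 ((dA : ℝ) * dB) = Real.logb 2 dA + Real.logb 2 dB :=
    Real.logb_mul (ne_of_gt hdA') (ne_of_gt hdB')
  rw [ge_iff_le, hsplit]
  linarith
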